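/- arXiv:1206.3359 — 4 statements merged into one kernel-verified Lean document; each statement's English description precedes it below -/
import Mathlib

section
/- Let N be an n×m real matrix whose columns indexed by a subset J ⊆ {1,…,m} are linearly independent, and let D = diag(D₁,…,D_m) be a diagonal matrix with D_i ≥ 0 for all i and D_i > 0 for every i ∉ J. Then the matrix NᵀN + D is symmetric positive definite (and hence nonsingular). -/
open Matrix

/-- If the columns of `N` indexed by `J` are linearly independent and `D` is a
diagonal matrix with nonnegative entries that are strictly positive off `J`, then
`Nᵀ N + D` is (symmetric) positive definite, hence nonsingular. -/
theorem stmt_0 (n m : ℕ) (N : Matrix (Fin n) (Fin m) ℝ) (J : Set (Fin m))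
    (hJ : LinearIndependent ℝ (fun i : J => (fun r => N r i.1 : Fin n → ℝ)))
    (D : Fin m → ℝ) (hD0 : ∀ i, 0 ≤ D i) (hDpos : ∀ i ∉ J, 0 < D i) :
    (Nᵀ * N + Matrix.diagonal D).PosDef ∧ IsUnit (Nᵀ * N + Matrix.diagonal D).det := by
  classical
  have hpd : (Nᵀ * N + Matrix.diagonal D).PosDef := by
    rw [Matrix.posDef_iff_dotProduct_mulVec]
    constructor
    · apply Matrix.IsHermitian.add
      · simpa using (Matrix.isHermitian_conjTranspose_mul_self N)
      · exact Matrix.isHermitian_diagonal_iff.mpr fun i => IsSelfAdjoint.all _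
    · intro x hx
      have key : star x ⬝ᵥ (Nᵀ * N + Matrix.diagonal D) *ᵥ x
          = (N *ᵥ x) ⬝ᵥ (N *ᵥ x) + ∑ i, D i * x i ^ 2 := by
        simp only [star_trivial, Matrix.add_mulVec, dotProduct_add]
        congr 1
        · rw [← Matrix.mulVec_mulVec, Matrix.dotProduct_mulVec, Matrix.vecMul_transpose]
        · simp [Matrix.mulVec_diagonal, dotProduct, sq, mul_comm, mul_assoc, mul_left_comm]
      rw [key]
      have h1 : 0 ≤ (N *ᵥ x) ⬝ᵥ (N *ᵥ x) := by
        simpa [dotProduct] using Finset.sum_nonneg fun i _ => mul_self_nonneg ((N *ᵥ x) i)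
      have h2 : ∀ i ∈ Finset.univ, 0 ≤ D i * x i ^ 2 :=
        fun i _ => mul_nonneg (hD0 i) (sq_nonneg _)
      have h2' : 0 ≤ ∑ i, D i * x i ^ 2 := Finset.sum_nonneg h2
      rcases lt_or_eq_of_le (add_nonneg h1 h2') with h | h
      · exact h
      exfalso
      -- the sum is zero, so each part is zero
      have hsum0 : (N *ᵥ x) ⬝ᵥ (N *ᵥ x) = 0 ∧ ∑ i, D i * x i ^ 2 = 0 := by
        constructor <;> linarith [h1, h2']
      have hNx : N *ᵥ x = 0 := by
        have : ∀ r, (N *ᵥ x) r = 0 := by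
          intro r
          have := hsum0.1
          simp only [dotProduct] at this
          have h0 : ∀ i ∈ Finset.univ, ((N *ᵥ x) i) * ((N *ᵥ x) i) = 0 :=
            (Finset.sum_eq_zero_iff_of_nonneg (fun i _ => mul_self_nonneg _)).mp this
          exact mul_self_eq_zero.mp (h0 r (Finset.mem_univ r))
        funext r; exact this r
      have hxoff : ∀ i ∉ J, x i = 0 := by
        intro i hi
        have h0 : ∀ i ∈ Finset.univ, D i * x i ^ 2 = 0 :=
          (Finset.sum_eq_zero_iff_of_nonneg h2).mp hsum0.2
        have := h0 i (Finset.mem_univ i)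
        have hD := hDpos i hi
        rcases mul_eq_zero.mp this with h' | h'
        · exact absurd h' hD.ne'
        · exact pow_eq_zero_iff (two_ne_zero) |>.mp h'
      haveI : Fintype J := Fintype.ofFinite J
      have hrepr : ∑ i : J, x i.1 • (fun r => N r i.1 : Fin n → ℝ) = 0 := by
        have expand : (N *ᵥ x) = ∑ i : Fin m, x i • (fun r => N r i : Fin n → ℝ) := by
          funext r
          simp [Matrix.mulVec, dotProduct, Finset.sum_apply, mul_comm]
        have split : ∑ i : Fin m, x i • (fun r => N r i : Fin n → ℝ)
            = ∑ i : J, x i.1 • (fun r => N r i.1 : Fin n → ℝ) := by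
          rw [← Finset.sum_subset (Finset.subset_univ J.toFinset)
            (fun i _ hi => by rw [hxoff i (by simpa using hi)]; simp)]
          exact Finset.sum_subtype J.toFinset (by simp) _
        rw [← split, ← expand, hNx]
      have hzero := linearIndependent_iff'.mp hJ Finset.univ (fun i => x i.1)
        (by simpa using hrepr)
      apply hx
      funext i
      by_cases hi : i ∈ J
      · exact hzero ⟨i, hi⟩ (Finset.mem_univ _)
      · exact hxoff i hi
  exact ⟨hpd, isUnit_iff_ne_zero.mpr hpd.det_pos.ne'⟩
end

section
/- Let H ∈ ℝ^{n×n} be symmetric positive definite, N ∈ ℝ^{n×m}, and Q = diag(Q₁,…,Q_m) with Qᵢ ≥ 0 for all i. Suppose that the columns of N indexed by J = {i : Qᵢ = 0} are linearly independent. Then the block matrix Γ = [[H, N],[Nᵀ, -Q]] is nonsingular. -/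
open Matrix

/-- If `H` is symmetric positive definite, `Q` is diagonal with nonnegative
entries, and the columns of `N` indexed by `{i : Qᵢ = 0}` are linearly independent, then
the block matrix `Γ = [[H, N], [Nᵀ, -Q]]` is nonsingular. -/
theorem stmt_3 (n m : ℕ) (H : Matrix (Fin n) (Fin n) ℝ) (hH : H.PosDef)
    (N : Matrix (Fin n) (Fin m) ℝ) (Q : Fin m → ℝ) (hQ : ∀ i, 0 ≤ Q i)
    (hind : LinearIndependent ℝ
      (fun i : {i : Fin m // Q i = 0} => (fun r => N r i.1 : Fin n → ℝ))) :
    IsUnit (Matrix.fromBlocks H N Nᵀ (-(Matrix.diagonal Q))).det := by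
  rw [isUnit_iff_ne_zero]
  intro hdet
  obtain ⟨v, hv, hker⟩ := (Matrix.exists_mulVec_eq_zero_iff).2 hdet
  set x : Fin n → ℝ := v ∘ Sum.inl with hx
  set y : Fin m → ℝ := v ∘ Sum.inr with hy
  have hv' : v = Sum.elim x y := by
    funext i; cases i <;> rfl
  rw [hv', Matrix.fromBlocks_mulVec] at hker
  have eq1 : H.mulVec x + N.mulVec y = 0 := by
    funext r
    have := congrFun hker (Sum.inl r)
    simpa using this
  have eq2 : Nᵀ.mulVec x + (-(Matrix.diagonal Q)).mulVec y = 0 := by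
    funext r
    have := congrFun hker (Sum.inr r)
    simpa using this
  -- key scalar identity
  have h1 : x ⬝ᵥ H.mulVec x + x ⬝ᵥ N.mulVec y = 0 := by
    rw [← dotProduct_add, eq1, dotProduct_zero]
  have eq2' : Nᵀ.mulVec x - (Matrix.diagonal Q).mulVec y = 0 := by
    rw [Matrix.neg_mulVec, ← sub_eq_add_neg] at eq2
    exact eq2
  have h2 : y ⬝ᵥ Nᵀ.mulVec x - y ⬝ᵥ (Matrix.diagonal Q).mulVec y = 0 := by
    rw [← dotProduct_sub, eq2', dotProduct_zero]
  have hswap : y ⬝ᵥ Nᵀ.mulVec x = x ⬝ᵥ N.mulVec y := by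
    rw [Matrix.dotProduct_mulVec, Matrix.vecMul_transpose, dotProduct_comm]
  have hQy : y ⬝ᵥ (Matrix.diagonal Q).mulVec y = ∑ i, Q i * (y i * y i) := by
    simp [dotProduct, Matrix.mulVec_diagonal]
    apply Finset.sum_congr rfl
    intro i _; ring
  have hsum : x ⬝ᵥ H.mulVec x + ∑ i, Q i * (y i * y i) = 0 := by
    rw [← hQy]
    have : y ⬝ᵥ (Matrix.diagonal Q).mulVec y = x ⬝ᵥ N.mulVec y := by
      rw [← hswap]; linarith
    rw [this]; exact h1
  have hterm : ∀ i, 0 ≤ Q i * (y i * y i) := fun i =>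
    mul_nonneg (hQ i) (mul_self_nonneg _)
  have hQsum : 0 ≤ ∑ i, Q i * (y i * y i) :=
    Finset.sum_nonneg fun i _ => hterm i
  have hx0 : x = 0 := by
    by_contra hx0
    have := hH.dotProduct_mulVec_pos hx0
    rw [star_trivial] at this
    nlinarith
  have hHx : x ⬝ᵥ H.mulVec x = 0 := by rw [hx0]; simp
  have hQzero : ∀ i, Q i * (y i * y i) = 0 := by
    intro i
    have hsum0 : ∑ i, Q i * (y i * y i) = 0 := by linarith
    exact (Finset.sum_eq_zero_iff_of_nonneg (fun i _ => hterm i)).1 hsum0 i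
      (Finset.mem_univ i)
  have hy0 : ∀ i, Q i ≠ 0 → y i = 0 := by
    intro i hQi
    rcases mul_eq_zero.1 (hQzero i) with h | h
    · exact absurd h hQi
    · exact pow_eq_zero_iff (n := 2) (by norm_num) |>.1 (by rw [sq]; exact h)
  have hNy : N.mulVec y = 0 := by
    have : H.mulVec x = 0 := by rw [hx0]; simp
    rw [this, zero_add] at eq1
    exact eq1
  -- transfer to the subtype sum
  have hsub : ∑ i : {i : Fin m // Q i = 0}, y i.1 • (fun r => N r i.1 : Fin n → ℝ) = 0 := by
    funext r
    have hfull : ∑ i : Fin m, y i * N r i = 0 := by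
      have := congrFun hNy r
      simpa [Matrix.mulVec, dotProduct, mul_comm] using this
    have hfilter : ∑ i ∈ Finset.univ.filter (fun i => Q i = 0), y i * N r i
        = ∑ i : Fin m, y i * N r i := by
      apply Finset.sum_filter_of_ne
      intro i _ hne
      by_contra hQi
      exact hne (by rw [hy0 i hQi, zero_mul])
    have hsubty : ∑ i : {i : Fin m // Q i = 0}, y i.1 * N r i.1
        = ∑ i ∈ Finset.univ.filter (fun i => Q i = 0), y i * N r i := by
      rw [← Finset.sum_subtype (Finset.univ.filter fun i => Q i = 0)
        (by simp) (fun i => y i * N r i)]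
    simpa using hsubty.trans (hfilter.trans hfull)
  have hyall : ∀ i : {i : Fin m // Q i = 0}, y i.1 = 0 := by
    have := Fintype.linearIndependent_iff.1 hind (fun i => y i.1) hsub
    exact this
  have hy' : y = 0 := by
    funext i
    by_cases hQi : Q i = 0
    · exact hyall ⟨i, hQi⟩
    · exact hy0 i hQi
  apply hv
  rw [hv', hx0, hy']
  funext i; cases i <;> rfl
end

section
/- With the hypotheses of the previous block-matrix lemma, for any right-hand side (0, r) ∈ ℝⁿ × ℝ^m, the system H d + N h = 0, Nᵀ d - Q h = r has a unique solution (d, h). -/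
open Matrix

/-- Under the hypotheses of the block-matrix lemma, for any right-hand side
`(0, r)` the system `H d + N h = 0`, `Nᵀ d - Q h = r` has a unique solution `(d, h)`. -/
theorem stmt_4 (n m : ℕ) (H : Matrix (Fin n) (Fin n) ℝ) (hH : H.PosDef)
    (N : Matrix (Fin n) (Fin m) ℝ) (Q : Fin m → ℝ) (hQ : ∀ i, 0 ≤ Q i)
    (hind : LinearIndependent ℝ
      (fun i : {i : Fin m // Q i = 0} => (fun r => N r i.1 : Fin n → ℝ)))
    (r : Fin m → ℝ) :
    ∃! p : (Fin n → ℝ) × (Fin m → ℝ),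
      H.mulVec p.1 + N.mulVec p.2 = 0 ∧
      Nᵀ.mulVec p.1 - (Matrix.diagonal Q).mulVec p.2 = r := by
  classical
  -- The linear map given by the block system
  set L : ((Fin n → ℝ) × (Fin m → ℝ)) →ₗ[ℝ] ((Fin n → ℝ) × (Fin m → ℝ)) :=
    { toFun := fun p => (H.mulVec p.1 + N.mulVec p.2,
        Nᵀ.mulVec p.1 - (Matrix.diagonal Q).mulVec p.2),
      map_add' := by
        intro p q
        simp only [Prod.fst_add, Prod.snd_add, Matrix.mulVec_add, Prod.mk_add_mk,
          Prod.mk.injEq]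
        constructor <;> abel
      map_smul' := by
        intro c p
        simp only [Prod.smul_fst, Prod.smul_snd, Matrix.mulVec_smul, RingHom.id_apply,
          Prod.smul_mk, Prod.mk.injEq, smul_add, smul_sub]
        try constructor <;> abel } with hLdef
  have hLapp : ∀ p : (Fin n → ℝ) × (Fin m → ℝ),
      L p = (H.mulVec p.1 + N.mulVec p.2,
        Nᵀ.mulVec p.1 - (Matrix.diagonal Q).mulVec p.2) := fun p => rfl
  have hinj : Function.Injective L := by
    rw [← LinearMap.ker_eq_bot, LinearMap.ker_eq_bot']
    rintro ⟨d, h⟩ hp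
    rw [hLapp, Prod.mk_eq_zero] at hp
    obtain ⟨h1, h2⟩ := hp
    -- take inner products
    have e1 : d ⬝ᵥ H.mulVec d + d ⬝ᵥ N.mulVec h = 0 := by
      have := congrArg (fun v => d ⬝ᵥ v) h1
      simpa [dotProduct_add] using this
    have e2 : h ⬝ᵥ Nᵀ.mulVec d - h ⬝ᵥ (Matrix.diagonal Q).mulVec h = 0 := by
      have := congrArg (fun v => h ⬝ᵥ v) h2
      simpa [dotProduct_sub] using this
    have key : h ⬝ᵥ Nᵀ.mulVec d = d ⬝ᵥ N.mulVec h := by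
      rw [Matrix.dotProduct_mulVec, Matrix.vecMul_transpose, dotProduct_comm]
    have esum : d ⬝ᵥ H.mulVec d + h ⬝ᵥ (Matrix.diagonal Q).mulVec h = 0 := by
      have hq : h ⬝ᵥ (Matrix.diagonal Q).mulVec h = d ⬝ᵥ N.mulVec h := by
        rw [← key]; linarith
      rw [hq]; exact e1
    have hQterm : ∀ i, (0:ℝ) ≤ h i * (Matrix.diagonal Q).mulVec h i := by
      intro i
      rw [Matrix.mulVec_diagonal]
      have := hQ i
      nlinarith [sq_nonneg (h i)]
    have hQh : (0:ℝ) ≤ h ⬝ᵥ (Matrix.diagonal Q).mulVec h :=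
      Finset.sum_nonneg fun i _ => hQterm i
    have hHd : (0:ℝ) ≤ d ⬝ᵥ H.mulVec d := by
      have := hH.posSemidef.dotProduct_mulVec_nonneg d
      simpa using this
    have hd0 : d = 0 := by
      by_contra hd
      have := hH.dotProduct_mulVec_pos hd
      simp only [RCLike.re_to_real, star_trivial] at this
      nlinarith
    have hQh0 : h ⬝ᵥ (Matrix.diagonal Q).mulVec h = 0 := by
      rw [hd0] at esum; simpa using esum
    have hterm : ∀ i, Q i ≠ 0 → h i = 0 := by
      intro i hi
      have := (Finset.sum_eq_zero_iff_of_nonneg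
        (fun j (_ : j ∈ Finset.univ) => hQterm j)).mp hQh0 i (Finset.mem_univ i)
      rw [Matrix.mulVec_diagonal] at this
      have hq2 : Q i * (h i * h i) = 0 := by ring_nf at this ⊢; linarith
      rcases mul_eq_zero.mp hq2 with h' | h'
      · exact absurd h' hi
      · exact mul_self_eq_zero.mp h'
    -- now N h = 0
    have hNh : N.mulVec h = 0 := by
      rw [hd0] at h1; simpa using h1
    have hsum : ∑ i : Fin m, h i • (fun j => N j i : Fin n → ℝ) = N.mulVec h := by
      funext j
      simp [Matrix.mulVec, dotProduct, Finset.sum_apply, mul_comm]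
    have hfilter : ∑ i ∈ Finset.univ.filter (fun i => Q i = 0),
        h i • (fun j => N j i : Fin n → ℝ)
        = ∑ i : Fin m, h i • (fun j => N j i : Fin n → ℝ) := by
      apply Finset.sum_filter_of_ne
      intro x _ hx
      by_contra hqx
      exact hx (by rw [hterm x hqx, zero_smul])
    have hsub : ∑ i : {i : Fin m // Q i = 0},
        h i.1 • (fun j => N j i.1 : Fin n → ℝ)
        = ∑ i ∈ Finset.univ.filter (fun i => Q i = 0),
          h i • (fun j => N j i : Fin n → ℝ) :=
      (Finset.sum_subtype (Finset.univ.filter (fun i => Q i = 0))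
        (by simp) (fun i => h i • (fun j => N j i : Fin n → ℝ))).symm
    have hzero : ∑ i : {i : Fin m // Q i = 0},
        (fun i : {i : Fin m // Q i = 0} => h i.1) i •
          (fun j => N j i.1 : Fin n → ℝ) = 0 := by
      rw [hsub, hfilter, hsum, hNh]
    have hcoef := (Fintype.linearIndependent_iff.mp hind)
      (fun i => h i.1) hzero
    have h0 : h = 0 := by
      funext i
      by_cases hi : Q i = 0
      · exact hcoef ⟨i, hi⟩
      · exact hterm i hi
    rw [hd0, h0]
    rfl
  have hsurj : Function.Surjective L :=
    (LinearMap.injective_iff_surjective).mp hinj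
  obtain ⟨p, hp⟩ := hsurj (0, r)
  refine ⟨p, ?_, ?_⟩
  · rw [hLapp, Prod.mk.injEq] at hp
    exact hp
  · intro q hq
    apply hinj
    rw [hp, hLapp, Prod.mk.injEq]
    exact hq
end

section
/- Let (x*, μ*) be a KKT pair for the problem min f₀(x) s.t. f_i(x) ≤ 0 (i ∈ I₁), f_i(x) = 0 (i ∈ I₂), and let c > |μ_i*| for all i ∈ I₂. Define λ_i* = μ_i* for i ∈ I₁ and λ_i* = μ_i* + c for i ∈ I₂. Then (x*, λ*) is a KKT pair for the penalized problem min F_c(x) := f₀(x) - c Σ_{i∈I₂} f_i(x) s.t. f_i(x) ≤ 0 for all i ∈ I₁ ∪ I₂. Conversely, if (x*, λ*) is a KKT pair of the penalized problem with c > |π_i(x*)| for i ∈ I₂, then (x*, μ*) with μ_i = λ_i (i∈I₁), μ_i = λ_i - c (i∈I₂) is a KKT pair of the original problem. -/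
open InnerProductSpace

lemma grad_pen {n : ℕ} (f₀ : EuclideanSpace ℝ (Fin n) → ℝ) {m : ℕ}
    (f : Fin m → EuclideanSpace ℝ (Fin n) → ℝ) (I₂ : Finset (Fin m))
    (hf₀ : ContDiff ℝ 1 f₀) (hf : ∀ i, ContDiff ℝ 1 (f i)) (c : ℝ)
    (x : EuclideanSpace ℝ (Fin n)) :
    gradient (fun x => f₀ x - c * ∑ i ∈ I₂, f i x) x
      = gradient f₀ x - c • ∑ i ∈ I₂, gradient (f i) x := by
  have h0 : HasFDerivAt f₀ (toDual ℝ _ (gradient f₀ x)) x :=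
    (hf₀.differentiable one_ne_zero x).hasGradientAt.hasFDerivAt
  have hi : ∀ i ∈ I₂, HasFDerivAt (f i) (toDual ℝ _ (gradient (f i) x)) x :=
    fun i _ => ((hf i).differentiable one_ne_zero x).hasGradientAt.hasFDerivAt
  have hsum : HasFDerivAt (fun x => ∑ i ∈ I₂, f i x)
      (∑ i ∈ I₂, toDual ℝ _ (gradient (f i) x)) x := HasFDerivAt.fun_sum hi
  have h : HasFDerivAt (fun x => f₀ x - c * ∑ i ∈ I₂, f i x)
      (toDual ℝ _ (gradient f₀ x) - c • ∑ i ∈ I₂, toDual ℝ _ (gradient (f i) x)) x :=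
    h0.sub (hsum.const_mul c)
  have h' : HasGradientAt (fun x => f₀ x - c * ∑ i ∈ I₂, f i x)
      (gradient f₀ x - c • ∑ i ∈ I₂, gradient (f i) x) x := by
    rw [hasGradientAt_iff_hasFDerivAt]
    convert h using 1
    · rfl
    · rfl
    simp [map_sub, map_smul, map_sum]
  exact h'.gradient

/-- exact-penalty KKT equivalence, Lemma 2.3: with
`F_c(x) = f₀(x) - c ∑_{i∈I₂} f_i(x)` and multipliers related by `λᵢ = μᵢ (i∈I₁)`,
`λᵢ = μᵢ + c (i∈I₂)`, and `c > |μᵢ|` for `i ∈ I₂`, the pair `(x*, μ)` is a KKT pair of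
the original (equality/inequality constrained) problem if and only if `(x*, λ)` is a KKT
pair of the penalized inequality-constrained problem. -/
theorem stmt_10 (n m : ℕ) (I₁ I₂ : Finset (Fin m)) (hdisj : Disjoint I₁ I₂)
    (f₀ : EuclideanSpace ℝ (Fin n) → ℝ) (f : Fin m → EuclideanSpace ℝ (Fin n) → ℝ)
    (hf₀ : ContDiff ℝ 1 f₀) (hf : ∀ i, ContDiff ℝ 1 (f i))
    (c : ℝ) (hc : 0 < c) (xstar : EuclideanSpace ℝ (Fin n))
    (μ lam : Fin m → ℝ)
    (hrel : (∀ i ∈ I₁, lam i = μ i) ∧ (∀ i ∈ I₂, lam i = μ i + c))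
    (hclarge : ∀ i ∈ I₂, |μ i| < c) :
    -- KKT pair of the original problem
    ((gradient f₀ xstar + ∑ i ∈ I₁ ∪ I₂, μ i • gradient (f i) xstar = 0 ∧
      (∀ i ∈ I₁, f i xstar ≤ 0 ∧ 0 ≤ μ i ∧ μ i * f i xstar = 0) ∧
      (∀ i ∈ I₂, f i xstar = 0))
    ↔
    -- KKT pair of the penalized problem min F_c s.t. f_i ≤ 0 (i ∈ I₁ ∪ I₂)
    (gradient (fun x => f₀ x - c * ∑ i ∈ I₂, f i x) xstar +
        ∑ i ∈ I₁ ∪ I₂, lam i • gradient (f i) xstar = 0 ∧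
      (∀ i ∈ I₁ ∪ I₂, f i xstar ≤ 0 ∧ 0 ≤ lam i ∧ lam i * f i xstar = 0))) := by
  obtain ⟨hrel1, hrel2⟩ := hrel
  have hg := grad_pen f₀ f I₂ hf₀ hf c xstar
  -- stationarity equivalence
  have hstat : gradient (fun x => f₀ x - c * ∑ i ∈ I₂, f i x) xstar +
        ∑ i ∈ I₁ ∪ I₂, lam i • gradient (f i) xstar
      = gradient f₀ xstar + ∑ i ∈ I₁ ∪ I₂, μ i • gradient (f i) xstar := by
    rw [hg, Finset.sum_union hdisj, Finset.sum_union hdisj]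
    have h1 : ∑ i ∈ I₁, lam i • gradient (f i) xstar
        = ∑ i ∈ I₁, μ i • gradient (f i) xstar :=
      Finset.sum_congr rfl fun i hi => by rw [hrel1 i hi]
    have h2 : ∑ i ∈ I₂, lam i • gradient (f i) xstar
        = ∑ i ∈ I₂, μ i • gradient (f i) xstar + c • ∑ i ∈ I₂, gradient (f i) xstar := by
      rw [Finset.smul_sum, ← Finset.sum_add_distrib]
      refine Finset.sum_congr rfl fun i hi => ?_
      rw [hrel2 i hi, add_smul]
    rw [h1, h2]
    abel
  have hpos : ∀ i ∈ I₂, 0 < lam i := by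
    intro i hi
    rw [hrel2 i hi]
    have := (abs_lt.mp (hclarge i hi)).1
    linarith
  constructor
  · rintro ⟨h0, h1, h2⟩
    refine ⟨by rw [hstat]; exact h0, ?_⟩
    intro i hi
    rcases Finset.mem_union.mp hi with h | h
    · obtain ⟨ha, hb, hcc⟩ := h1 i h
      exact ⟨ha, by rw [hrel1 i h]; exact hb, by rw [hrel1 i h]; exact hcc⟩
    · exact ⟨le_of_eq (h2 i h), (hpos i h).le, by rw [h2 i h]; ring⟩
  · rintro ⟨h0, h1⟩
    have h2 : ∀ i ∈ I₂, f i xstar = 0 := by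
      intro i hi
      obtain ⟨_, _, hcc⟩ := h1 i (Finset.mem_union_right _ hi)
      exact (mul_eq_zero.mp hcc).resolve_left (ne_of_gt (hpos i hi))
    refine ⟨by rw [← hstat]; exact h0, ?_, h2⟩
    intro i hi
    obtain ⟨ha, hb, hcc⟩ := h1 i (Finset.mem_union_left _ hi)
    exact ⟨ha, by rw [← hrel1 i hi]; exact hb, by rw [← hrel1 i hi]; exact hcc⟩
end
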